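/- Let f : [0,1] → [0,1] be any continuous map and define the continuous map F : [0,3] → [0,3] by F(x) = f(x) + 2 for 0 ≤ x ≤ 1, F(x) = (2 − x)(f(1) + 2) for 1 ≤ x ≤ 2, and F(x) = x − 2 for 2 ≤ x ≤ 3. Then for every δ > 0, F has no nonempty δ-scrambled set that is invariant under F. -/
import Mathlib


open Filter Set Function

/-- `limsup_{n→∞} |fⁿ(x) − fⁿ(y)|`. -/
noncomputable def limsupD (f : ℝ → ℝ) (x y : ℝ) : ℝ :=
  Filter.limsup (fun n : ℕ => |f^[n] x - f^[n] y|) Filter.atTop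

/-- `liminf_{n→∞} |fⁿ(x) − fⁿ(y)|`. -/
noncomputable def liminfD (f : ℝ → ℝ) (x y : ℝ) : ℝ :=
  Filter.liminf (fun n : ℕ => |f^[n] x - f^[n] y|) Filter.atTop

/-- `p` is a periodic point of `f`. -/
def PerPt (f : ℝ → ℝ) (p : ℝ) : Prop := ∃ m : ℕ, 0 < m ∧ f^[m] p = p

/-- `p` is a periodic point of `f` of least period `k`. -/
def LeastPeriod (f : ℝ → ℝ) (p : ℝ) (k : ℕ) : Prop :=
  f^[k] p = p ∧ ∀ i : ℕ, 0 < i → i < k → f^[i] p ≠ p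

/-- `S ⊆ I` is a `δ`-scrambled set of the map `f : I → I`. -/
def ScrambledSet (f : ℝ → ℝ) (I : Set ℝ) (δ : ℝ) (S : Set ℝ) : Prop :=
  S ⊆ I ∧
  (∀ x ∈ S, ∀ y ∈ S, x ≠ y → δ ≤ limsupD f x y ∧ liminfD f x y = 0) ∧
  (∀ x ∈ S, ∀ p ∈ I, PerPt f p → δ / 2 ≤ limsupD f x p)

/-- The ω-limit set of `x` under `f`: the set of limit points of the orbit of `x`. -/
def OmegaSet (f : ℝ → ℝ) (x : ℝ) : Set ℝ :=
  {y : ℝ | ∀ ε > 0, ∀ N : ℕ, ∃ n ≥ N, |f^[n] x - y| < ε}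

/-- `x` is a recurrent point of `f`. -/
def RecPt (f : ℝ → ℝ) (x : ℝ) : Prop := x ∈ OmegaSet f x

/-- `f` is turbulent on `I`: there are closed nondegenerate subintervals `J₀, J₁` of `I`
with at most one common point with `f(J₀) ∩ f(J₁) ⊇ J₀ ∪ J₁`. -/
def Turbulent (f : ℝ → ℝ) (I : Set ℝ) : Prop :=
  ∃ p q r s : ℝ, p < q ∧ r < s ∧ Set.Icc p q ⊆ I ∧ Set.Icc r s ⊆ I ∧
    (Set.Icc p q ∩ Set.Icc r s).Subsingleton ∧
    Set.Icc p q ∪ Set.Icc r s ⊆ f '' Set.Icc p q ∩ f '' Set.Icc r s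

/-- `f` is strictly turbulent on `I`: the two intervals can be chosen disjoint. -/
def StrictlyTurbulent (f : ℝ → ℝ) (I : Set ℝ) : Prop :=
  ∃ p q r s : ℝ, p < q ∧ r < s ∧ Set.Icc p q ⊆ I ∧ Set.Icc r s ⊆ I ∧
    Disjoint (Set.Icc p q) (Set.Icc r s) ∧
    Set.Icc p q ∪ Set.Icc r s ⊆ f '' Set.Icc p q ∩ f '' Set.Icc r s

/-- The square root construction applied to any continuous map
`f : [0,1] → [0,1]` yields a map `F : [0,3] → [0,3]` which has no nonempty invariant
`δ`-scrambled set, for any `δ > 0`. -/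
theorem no_invariant_scrambled_set_of_square_root
    (f F : ℝ → ℝ)
    (hf : ContinuousOn f (Set.Icc 0 1))
    (hfm : Set.MapsTo f (Set.Icc 0 1) (Set.Icc 0 1))
    (hF1 : ∀ x ∈ Set.Icc (0:ℝ) 1, F x = f x + 2)
    (hF2 : ∀ x ∈ Set.Icc (1:ℝ) 2, F x = (2 - x) * (f 1 + 2))
    (hF3 : ∀ x ∈ Set.Icc (2:ℝ) 3, F x = x - 2) :
    ∀ δ > 0, ∀ S : Set ℝ, ScrambledSet F (Set.Icc 0 3) δ S → Set.MapsTo F S S → S = ∅ := by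
  intro δ hδ S hscr hinv
  by_contra hne
  obtain ⟨x, hxS⟩ := Set.nonempty_iff_ne_empty.2 hne
  -- basic facts
  have hf1 : f 1 ∈ Set.Icc (0:ℝ) 1 := hfm (by norm_num)
  set c : ℝ := f 1 + 2 with hc_def
  have hc2 : (2:ℝ) ≤ c := by have := hf1.1; simp only [hc_def]; linarith
  have hc3 : c ≤ 3 := by have := hf1.2; simp only [hc_def]; linarith
  have hcpos : (0:ℝ) < 1 + c := by linarith
  set p : ℝ := 2 * c / (1 + c) with hp_def
  have hp1 : 1 < p := by
    rw [hp_def, lt_div_iff₀ hcpos]; linarith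
  have hp2 : p < 2 := by
    rw [hp_def, div_lt_iff₀ hcpos]; linarith
  have hpc : p * (1 + c) = 2 * c := by
    rw [hp_def]; field_simp
  have hpfix : F p = p := by
    rw [hF2 p ⟨le_of_lt hp1, le_of_lt hp2⟩]
    linear_combination -hpc
  have hitS : ∀ n, F^[n] x ∈ S := fun n => (hinv.iterate n) hxS
  -- alternation facts
  have h01 : ∀ z ∈ Set.Icc (0:ℝ) 1, F z ∈ Set.Icc (2:ℝ) 3 := by
    intro z hz
    rw [hF1 z hz]
    have := hfm hz
    exact ⟨by linarith [this.1], by linarith [this.2]⟩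
  have h23 : ∀ z ∈ Set.Icc (2:ℝ) 3, F z ∈ Set.Icc (0:ℝ) 1 := by
    intro z hz
    rw [hF3 z hz]
    exact ⟨by linarith [hz.1], by linarith [hz.2]⟩
  by_cases hall : ∀ n, F^[n] x ∈ Set.Ioo (1:ℝ) 2
  · -- all iterates stay in (1,2): then x = p, contradicting condition (ii)
    have key : ∀ n, |F^[n] x - p| = c ^ n * |x - p| := by
      intro n
      induction n with
      | zero => simp
      | succ n ih =>
        have hmem := hall n
        rw [Function.iterate_succ_apply',
          hF2 _ ⟨le_of_lt hmem.1, le_of_lt hmem.2⟩]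
        have : (2 - F^[n] x) * c - p = -(c * (F^[n] x - p)) := by
          linear_combination -hpc
        have h2 : |(2 - F^[n] x) * c - p| = c * |F^[n] x - p| := by
          rw [this, abs_neg, abs_mul, abs_of_pos (by linarith : (0:ℝ) < c)]
        calc |(2 - F^[n] x) * c - p| = c * |F^[n] x - p| := h2
          _ = c * (c ^ n * |x - p|) := by rw [ih]
          _ = c ^ (n + 1) * |x - p| := by ring
    have hxp : x = p := by
      by_contra hxp
      have habs : 0 < |x - p| := abs_pos.2 (sub_ne_zero.2 hxp)
      obtain ⟨n, hn⟩ := pow_unbounded_of_one_lt (1 / |x - p|) (by norm_num : (1:ℝ) < 2)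
      have hb : |F^[n] x - p| ≤ 1 := by
        have hmem := hall n
        rw [abs_le]; constructor <;> [linarith [hmem.1]; linarith [hmem.2]]
      have h2n : (2:ℝ) ^ n ≤ c ^ n := pow_le_pow_left₀ (by norm_num) hc2 n
      rw [key n] at hb
      have : 1 / |x - p| < c ^ n := lt_of_lt_of_le hn h2n
      rw [div_lt_iff₀ habs] at this
      nlinarith
    -- x = p is a fixed point; condition (ii) with p = x gives δ/2 ≤ 0
    have hper : PerPt F x := ⟨1, one_pos, by simp [hxp, hpfix]⟩
    have hxI : x ∈ Set.Icc (0:ℝ) 3 := hscr.1 hxS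
    have hle := hscr.2.2 x hxS x hxI hper
    have : limsupD F x x = 0 := by
      simp [limsupD, Filter.limsup_const]
    rw [this] at hle
    linarith
  · -- some iterate leaves (1,2); its orbit then alternates between [0,1] and [2,3]
    push_neg at hall
    obtain ⟨n₀, hn₀⟩ := hall
    set y := F^[n₀] x with hy_def
    have hyS : y ∈ S := hitS n₀
    have hyI : y ∈ Set.Icc (0:ℝ) 3 := hscr.1 hyS
    have hy : y ∈ Set.Icc (0:ℝ) 1 ∪ Set.Icc (2:ℝ) 3 := by
      rcases le_or_gt y 1 with h | h
      · exact Or.inl ⟨hyI.1, h⟩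
      · rcases le_or_gt 2 y with h' | h'
        · exact Or.inr ⟨h', hyI.2⟩
        · exact absurd ⟨h, h'⟩ hn₀
    have halt : ∀ k, (F^[k] y ∈ Set.Icc (0:ℝ) 1 ∧ F^[k+1] y ∈ Set.Icc (2:ℝ) 3) ∨
        (F^[k] y ∈ Set.Icc (2:ℝ) 3 ∧ F^[k+1] y ∈ Set.Icc (0:ℝ) 1) := by
      intro k
      induction k with
      | zero =>
        rcases hy with h | h
        · exact Or.inl ⟨h, by rw [Function.iterate_one]; exact h01 y h⟩
        · exact Or.inr ⟨h, by rw [Function.iterate_one]; exact h23 y h⟩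
      | succ k ih =>
        rcases ih with ⟨_, h2⟩ | ⟨_, h2⟩
        · exact Or.inr ⟨h2, by rw [Function.iterate_succ_apply']; exact h23 _ h2⟩
        · exact Or.inl ⟨h2, by rw [Function.iterate_succ_apply']; exact h01 _ h2⟩
    have hge : ∀ k, (1:ℝ) ≤ |F^[k] y - F^[k] (F y)| := by
      intro k
      have heq : F^[k] (F y) = F^[k+1] y := (Function.iterate_succ_apply F k y).symm
      rw [heq]
      rcases halt k with ⟨h1, h2⟩ | ⟨h1, h2⟩
      · rcases abs_cases (F^[k] y - F^[k+1] y) with ⟨h, _⟩ | ⟨h, _⟩ <;>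
          [linarith [h1.2, h2.1]; linarith [h1.2, h2.1]]
      · rcases abs_cases (F^[k] y - F^[k+1] y) with ⟨h, _⟩ | ⟨h, _⟩ <;>
          [linarith [h1.1, h2.2]; linarith [h1.1, h2.2]]
    have hneq : y ≠ F y := by
      intro h
      rcases halt 0 with ⟨h1, h2⟩ | ⟨h1, h2⟩ <;>
        rw [Function.iterate_zero_apply] at h1 <;>
        rw [Function.iterate_one] at h2 <;> rw [← h] at h2 <;>
        [linarith [h1.2, h2.1]; linarith [h1.1, h2.2]]
    have hFyS : F y ∈ S := hinv hyS
    have hlim : liminfD F y (F y) = 0 := (hscr.2.1 y hyS (F y) hFyS hneq).2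
    have hbound : Filter.IsBoundedUnder (· ≤ ·) Filter.atTop
        (fun k : ℕ => |F^[k] y - F^[k] (F y)|) := by
      refine Filter.isBoundedUnder_of ⟨3, fun k => ?_⟩
      have ha : F^[k] y ∈ Set.Icc (0:ℝ) 3 := hscr.1 ((hinv.iterate k) hyS)
      have hb : F^[k] (F y) ∈ Set.Icc (0:ℝ) 3 := hscr.1 ((hinv.iterate k) hFyS)
      rcases abs_cases (F^[k] y - F^[k] (F y)) with ⟨h, _⟩ | ⟨h, _⟩ <;>
        [linarith [ha.2, hb.1]; linarith [ha.1, hb.2]]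
    have h1le : (1:ℝ) ≤ liminfD F y (F y) :=
      Filter.le_liminf_of_le hbound.isCoboundedUnder_ge
        (Filter.Eventually.of_forall hge)
    rw [hlim] at h1le
    linarith
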